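/- Let X be a symmetric n×n matrix of variables over a field of characteristic 0. For any i < j, the operator ∂²/∂x_{ij}² − 2·∂²/(∂x_{ii}∂x_{jj}) annihilates perm(X), the permanent of X. -/

import Mathlib

open MvPolynomial

/-- The permanent of the generic symmetric `n × n` matrix, a polynomial in the
variables `x_{ij} = x_{ji}` indexed by `Sym2 (Fin n)`. -/
noncomputable def symPerm (K : Type*) [Field K] (n : ℕ) : MvPolynomial (Sym2 (Fin n)) K :=
  ∑ σ : Equiv.Perm (Fin n), ∏ i : Fin n, X s(i, σ i)

private lemma pderiv_prod_X_eq_zero {K : Type*} [Field K] {n : ℕ}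
    (v : Sym2 (Fin n)) (f : Fin n → Sym2 (Fin n)) (s : Finset (Fin n))
    (h : ∀ k ∈ s, f k ≠ v) :
    pderiv v (∏ k ∈ s, (X (f k) : MvPolynomial (Sym2 (Fin n)) K)) = 0 := by
  classical
  induction s using Finset.induction with
  | empty => simp
  | @insert a s ha ih =>
    rw [Finset.prod_insert ha, pderiv_mul,
      ih (fun k hk => h k (Finset.mem_insert_of_mem hk)),
      pderiv_X_of_ne (h _ (Finset.mem_insert_self _ _))]
    ring

set_option maxHeartbeats 1000000 in
/-- For the permanent of the generic symmetric `n × n` matrix, the operator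
`∂²/∂x_{ij}² − 2·∂²/(∂x_{ii}∂x_{jj})` (with `i < j`) annihilates `perm X`. -/
theorem diag_minor_annihilates_perm {K : Type*} [Field K] [CharZero K]
    (n : ℕ) (i j : Fin n) (hij : i < j) :
    pderiv s(i, j) (pderiv s(i, j) (symPerm K n))
      - 2 * pderiv s(i, i) (pderiv s(j, j) (symPerm K n)) = 0 := by
  classical
  have hne : i ≠ j := hij.ne
  set t : Finset (Fin n) := (Finset.univ.erase i).erase j with ht
  have hjt : j ∈ Finset.univ.erase i := Finset.mem_erase.2 ⟨hne.symm, Finset.mem_univ j⟩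
  -- split any product over `Fin n` at `i` and `j`
  have hsplit : ∀ g : Fin n → MvPolynomial (Sym2 (Fin n)) K,
      ∏ k, g k = g i * (g j * ∏ k ∈ t, g k) := by
    intro g
    rw [← Finset.mul_prod_erase Finset.univ g (Finset.mem_univ i),
      ← Finset.mul_prod_erase _ g hjt]
  have htk : ∀ k ∈ t, k ≠ i ∧ k ≠ j := by
    intro k hk
    obtain ⟨hk1, hk2⟩ := Finset.mem_erase.1 hk
    exact ⟨(Finset.mem_erase.1 hk2).1, hk1⟩
  -- the rest of the product
  set R : Equiv.Perm (Fin n) → MvPolynomial (Sym2 (Fin n)) K :=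
    fun σ => ∏ k ∈ t, X s(k, σ k) with hR
  have hRzero : ∀ (σ : Equiv.Perm (Fin n)) (a b : Fin n),
      (a = i ∨ a = j) → (b = i ∨ b = j) → pderiv s(a, b) (R σ) = 0 := by
    intro σ a b hA hB
    apply pderiv_prod_X_eq_zero
    intro k hk heq
    obtain ⟨hki, hkj⟩ := htk k hk
    rcases Sym2.eq_iff.1 heq with ⟨h1, _⟩ | ⟨h1, _⟩ <;>
      rcases hA with rfl | rfl <;> rcases hB with rfl | rfl <;> simp_all
  -- the two second derivatives, termwise
  have key1 : ∀ σ : Equiv.Perm (Fin n),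
      pderiv s(i, j) (pderiv s(i, j) (∏ k, (X s(k, σ k) : MvPolynomial (Sym2 (Fin n)) K)))
        = if σ i = j ∧ σ j = i then 2 * R σ else 0 := by
    intro σ
    have hr : pderiv s(i, j) (R σ) = 0 := hRzero σ i j (Or.inl rfl) (Or.inr rfl)
    rw [hsplit (fun k => X s(k, σ k))]
    simp only [hR] at hr ⊢
    by_cases h1 : σ i = j <;> by_cases h2 : σ j = i
    · have ha : (s(i, σ i) : Sym2 (Fin n)) = s(i, j) := by rw [h1]
      have hb : (s(j, σ j) : Sym2 (Fin n)) = s(i, j) := by rw [h2]; exact Sym2.eq_swap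
      rw [ha, hb, if_pos ⟨h1, h2⟩]
      simp only [pderiv_mul, pderiv_X_self, hr, mul_zero, add_zero, one_mul, map_add, mul_one]
      ring
    · have ha : (s(i, σ i) : Sym2 (Fin n)) = s(i, j) := by rw [h1]
      have hb : (s(j, σ j) : Sym2 (Fin n)) ≠ s(i, j) := by
        intro h; rcases Sym2.eq_iff.1 h with ⟨h', _⟩ | ⟨_, h'⟩ <;> simp_all
      rw [ha, if_neg (by tauto)]
      simp only [pderiv_mul, pderiv_X_self, pderiv_X_of_ne hb, hr, mul_zero, add_zero,
        zero_mul, zero_add, one_mul, map_add, mul_one]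
    · have ha : (s(i, σ i) : Sym2 (Fin n)) ≠ s(i, j) := by
        intro h; rcases Sym2.eq_iff.1 h with ⟨_, h'⟩ | ⟨h', _⟩ <;> simp_all
      have hb : (s(j, σ j) : Sym2 (Fin n)) = s(i, j) := by rw [h2]; exact Sym2.eq_swap
      rw [hb, if_neg (by tauto)]
      simp only [pderiv_mul, pderiv_X_self, pderiv_X_of_ne ha, hr, mul_zero, add_zero,
        zero_mul, zero_add, one_mul, map_add, mul_one]
    · have ha : (s(i, σ i) : Sym2 (Fin n)) ≠ s(i, j) := by
        intro h; rcases Sym2.eq_iff.1 h with ⟨_, h'⟩ | ⟨h', _⟩ <;> simp_all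
      have hb : (s(j, σ j) : Sym2 (Fin n)) ≠ s(i, j) := by
        intro h; rcases Sym2.eq_iff.1 h with ⟨h', _⟩ | ⟨_, h'⟩ <;> simp_all
      rw [if_neg (by tauto)]
      simp only [pderiv_mul, pderiv_X_of_ne ha, pderiv_X_of_ne hb, hr, mul_zero, add_zero,
        zero_mul, zero_add, map_zero]
  have key2 : ∀ σ : Equiv.Perm (Fin n),
      pderiv s(i, i) (pderiv s(j, j) (∏ k, (X s(k, σ k) : MvPolynomial (Sym2 (Fin n)) K)))
        = if σ i = i ∧ σ j = j then R σ else 0 := by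
    intro σ
    have hrjj : pderiv s(j, j) (R σ) = 0 := hRzero σ j j (Or.inr rfl) (Or.inr rfl)
    have hrii : pderiv s(i, i) (R σ) = 0 := hRzero σ i i (Or.inl rfl) (Or.inl rfl)
    have hajj : (s(i, σ i) : Sym2 (Fin n)) ≠ s(j, j) := by
      intro h; rcases Sym2.eq_iff.1 h with ⟨h', _⟩ | ⟨h', _⟩ <;> exact hne h'
    have hbii : (s(j, σ j) : Sym2 (Fin n)) ≠ s(i, i) := by
      intro h; rcases Sym2.eq_iff.1 h with ⟨h', _⟩ | ⟨h', _⟩ <;> exact hne h'.symm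
    have hd : (s(i, i) : Sym2 (Fin n)) ≠ s(j, j) := by
      intro h; rcases Sym2.eq_iff.1 h with ⟨h', _⟩ | ⟨h', _⟩ <;> exact hne h'
    rw [hsplit (fun k => X s(k, σ k))]
    simp only [hR] at hrjj hrii ⊢
    by_cases h2 : σ j = j
    · have hb : (s(j, σ j) : Sym2 (Fin n)) = s(j, j) := by rw [h2]
      by_cases h1 : σ i = i
      · have ha : (s(i, σ i) : Sym2 (Fin n)) = s(i, i) := by rw [h1]
        rw [hb, ha, if_pos ⟨h1, h2⟩]
        simp only [pderiv_mul, pderiv_X_self, pderiv_X_of_ne hd, pderiv_X_of_ne hd.symm,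
          hrjj, hrii, mul_zero, add_zero, zero_mul, zero_add, one_mul, map_add, mul_one]
      · have ha : (s(i, σ i) : Sym2 (Fin n)) ≠ s(i, i) := by
          intro h; rcases Sym2.eq_iff.1 h with ⟨_, h'⟩ | ⟨h', _⟩ <;> simp_all
        rw [hb, if_neg (by tauto)]
        simp only [pderiv_mul, pderiv_X_self, pderiv_X_of_ne hajj, pderiv_X_of_ne hbii,
          pderiv_X_of_ne ha, hrjj, hrii, mul_zero, add_zero, zero_mul, zero_add, one_mul,
          map_add, mul_one, map_zero]
    · have hb : (s(j, σ j) : Sym2 (Fin n)) ≠ s(j, j) := by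
        intro h; rcases Sym2.eq_iff.1 h with ⟨_, h'⟩ | ⟨h', _⟩ <;> simp_all
      rw [if_neg (by tauto)]
      simp only [pderiv_mul, pderiv_X_of_ne hajj, pderiv_X_of_ne hb, hrjj,
        mul_zero, add_zero, zero_mul, zero_add, map_zero]
  -- reindex the first sum by right-multiplication with the swap
  have hre : (∑ σ : Equiv.Perm (Fin n), if σ i = j ∧ σ j = i then 2 * R σ else 0)
      = ∑ σ : Equiv.Perm (Fin n), if σ i = i ∧ σ j = j then 2 * R σ else 0 := by
    refine (Fintype.sum_equiv (Equiv.mulRight (Equiv.swap i j)) _ _ fun σ => ?_).symm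
    have hci : (σ * Equiv.swap i j) i = σ j := by
      simp [Equiv.Perm.mul_apply, Equiv.swap_apply_left]
    have hcj : (σ * Equiv.swap i j) j = σ i := by
      simp [Equiv.Perm.mul_apply, Equiv.swap_apply_right]
    have hRs : R (σ * Equiv.swap i j) = R σ := by
      refine Finset.prod_congr rfl fun k hk => ?_
      obtain ⟨hki, hkj⟩ := htk k hk
      simp [Equiv.Perm.mul_apply, Equiv.swap_apply_of_ne_of_ne hki hkj]
    simp only [Equiv.coe_mulRight, hci, hcj, hRs]
    by_cases h1 : σ i = i <;> by_cases h2 : σ j = j <;> simp [h1, h2]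
  -- put everything together
  unfold symPerm
  simp only [map_sum, key1, key2]
  rw [hre, Finset.mul_sum, ← Finset.sum_sub_distrib]
  apply Finset.sum_eq_zero
  intro σ _
  split_ifs <;> ring
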